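/- Let σ, τ be coprime positive integers, R > 0, and suppose there exist integers 0 ≤ ℓ₁, ℓ₂ ≤ ⌈σ/2⌉−1 and 0 ≤ k₁, k₂ ≤ ⌈τ/2⌉−1 and φ₁, φ₂ ∈ [0,R) with φ₁ = 2R/σ − φ_σ + ℓ₁·2R/σ = φ_τ + k₁·2R/τ and φ₂ = φ_σ + ℓ₂·2R/σ = 2R/τ − φ_τ + k₂·2R/τ. Then a contradiction follows; i.e., Φ_{σ,2} ∩ Φ_{τ,1} and Φ_{σ,1} ∩ Φ_{τ,2} cannot both be nonempty when Φ_{σ,1} ∩ Φ_{τ,1} ≠ ∅. -/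

import Mathlib

theorem candidate_sets_lemma3
    (σ τ : ℕ) (hσ : 0 < σ) (hτ : 0 < τ) (hcop : Nat.Coprime σ τ)
    (R : ℝ) (hR : 0 < R) (φσ φτ : ℝ) (hφσ : 0 ≤ φσ) (hφτ : 0 ≤ φτ)
    (φ₁ φ₂ : ℝ) (hφ₁ : φ₁ ∈ Set.Ico 0 R) (hφ₂ : φ₂ ∈ Set.Ico 0 R)
    (ℓ₁ ℓ₂ k₁ k₂ : ℕ)
    (hℓ₁ : ℓ₁ ≤ (σ + 1) / 2 - 1) (hℓ₂ : ℓ₂ ≤ (σ + 1) / 2 - 1)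
    (hk₁ : k₁ ≤ (τ + 1) / 2 - 1) (hk₂ : k₂ ≤ (τ + 1) / 2 - 1)
    (h1σ : φ₁ = 2 * R / σ - φσ + ℓ₁ * (2 * R / σ))
    (h1τ : φ₁ = φτ + k₁ * (2 * R / τ))
    (h2σ : φ₂ = φσ + ℓ₂ * (2 * R / σ))
    (h2τ : φ₂ = 2 * R / τ - φτ + k₂ * (2 * R / τ)) :
    False := by
  have hσR : (σ:ℝ) ≠ 0 := Nat.cast_ne_zero.mpr hσ.ne'
  have hτR : (τ:ℝ) ≠ 0 := Nat.cast_ne_zero.mpr hτ.ne'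
  have hsumσ : φ₁ + φ₂ = ((1+ℓ₁+ℓ₂:ℕ):ℝ) * (2*R/σ) := by
    rw [h1σ, h2σ]; push_cast; ring
  have hsumτ : φ₁ + φ₂ = ((1+k₁+k₂:ℕ):ℝ) * (2*R/τ) := by
    rw [h1τ, h2τ]; push_cast; ring
  have heq : ((1+ℓ₁+ℓ₂:ℕ):ℝ) * τ = ((1+k₁+k₂:ℕ):ℝ) * σ := by
    have h := hsumσ.symm.trans hsumτ
    field_simp at h
    have h' : ((1+ℓ₁+ℓ₂:ℕ):ℝ) * ↑τ * (2*R) = ((1+k₁+k₂:ℕ):ℝ) * ↑σ * (2*R) := by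
      push_cast at h ⊢; linear_combination (2*R) * h
    exact mul_right_cancel₀ (by positivity) h'
  have heqN : (1+ℓ₁+ℓ₂) * τ = (1+k₁+k₂) * σ := by exact_mod_cast heq
  have hdvd : σ ∣ (1+ℓ₁+ℓ₂) := hcop.dvd_of_dvd_mul_right ⟨1+k₁+k₂, by rw [heqN, Nat.mul_comm]⟩
  have hle : (1+ℓ₁+ℓ₂) ≤ σ := by omega
  have hm : (1+ℓ₁+ℓ₂) = σ := Nat.le_antisymm hle (Nat.le_of_dvd (by omega) hdvd)
  rw [hm] at hsumσ
  have : φ₁ + φ₂ = 2*R := by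
    rw [hsumσ]; field_simp
  obtain ⟨_, h1⟩ := hφ₁
  obtain ⟨_, h2⟩ := hφ₂
  linarith
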